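/- If a week had d ≥ 1 days, then in the sample space ({B,G} × Fin d)² with uniform measure, the conditional probability of two boys given at least one boy born on a fixed day t equals (2d−1)/(4d−1). -/

import Mathlib

inductive Gender | B | G deriving DecidableEq

instance instFintypeGender : Fintype Gender :=
  ⟨{Gender.B, Gender.G}, fun x => by cases x <;> simp⟩

/-- Conditional probability under the uniform distribution on a finite type. -/
def condProb {α : Type*} [Fintype α] (A E : α → Prop) [DecidablePred A] [DecidablePred E] : ℚ :=
  ((Finset.univ.filter fun s => A s ∧ E s).card : ℚ) / ((Finset.univ.filter E).card : ℚ)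

theorem stmt_11 (d : ℕ) (hd : 1 ≤ d) (t : Fin d) :
    condProb (fun s : (Gender × Fin d) × (Gender × Fin d) =>
        s.1.1 = Gender.B ∧ s.2.1 = Gender.B)
      (fun s => s.1 = (Gender.B, t) ∨ s.2 = (Gender.B, t)) =
      (2 * (d : ℚ) - 1) / (4 * (d : ℚ) - 1) := by
  classical
  have hB : (Finset.univ.filter fun x : Gender × Fin d => x.1 = Gender.B)
      = ({Gender.B} : Finset Gender) ×ˢ Finset.univ := by
    ext x
    simp only [Finset.mem_filter, Finset.mem_univ, true_and, Finset.mem_product,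
      Finset.mem_singleton, and_true]
  have hBcard : (Finset.univ.filter fun x : Gender × Fin d => x.1 = Gender.B).card = d := by
    rw [hB, Finset.card_product]; simp
  -- numerator
  have hnum : (Finset.univ.filter fun s : (Gender × Fin d) × (Gender × Fin d) =>
      (s.1.1 = Gender.B ∧ s.2.1 = Gender.B) ∧
        (s.1 = (Gender.B, t) ∨ s.2 = (Gender.B, t))).card = 2 * d - 1 := by
    have hcongr : (Finset.univ.filter fun s : (Gender × Fin d) × (Gender × Fin d) =>
        (s.1.1 = Gender.B ∧ s.2.1 = Gender.B) ∧ (s.1 = (Gender.B, t) ∨ s.2 = (Gender.B, t)))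
        = Finset.univ.filter fun s =>
          (s.1 = (Gender.B, t) ∧ s.2.1 = Gender.B) ∨
            (s.1.1 = Gender.B ∧ s.2 = (Gender.B, t)) := by
      apply Finset.filter_congr
      intro s _
      constructor
      · rintro ⟨⟨h1, h2⟩, h3 | h3⟩
        · exact Or.inl ⟨h3, h2⟩
        · exact Or.inr ⟨h1, h3⟩
      · rintro (⟨h1, h2⟩ | ⟨h1, h2⟩)
        · exact ⟨⟨by rw [h1], h2⟩, Or.inl h1⟩
        · exact ⟨⟨h1, by rw [h2]⟩, Or.inr h2⟩
    rw [hcongr, Finset.filter_or]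
    have h1 : (Finset.univ.filter fun s : (Gender × Fin d) × (Gender × Fin d) =>
        s.1 = (Gender.B, t) ∧ s.2.1 = Gender.B)
        = ({(Gender.B, t)} : Finset (Gender × Fin d)) ×ˢ
          (Finset.univ.filter fun x : Gender × Fin d => x.1 = Gender.B) := by
      ext s
      simp only [Finset.mem_filter, Finset.mem_univ, true_and, Finset.mem_product,
        Finset.mem_singleton]
    have h2 : (Finset.univ.filter fun s : (Gender × Fin d) × (Gender × Fin d) =>
        s.1.1 = Gender.B ∧ s.2 = (Gender.B, t))
        = (Finset.univ.filter fun x : Gender × Fin d => x.1 = Gender.B) ×ˢ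
          ({(Gender.B, t)} : Finset (Gender × Fin d)) := by
      ext s
      simp only [Finset.mem_filter, Finset.mem_univ, true_and, Finset.mem_product,
        Finset.mem_singleton]
    have hinter : ((Finset.univ.filter fun s : (Gender × Fin d) × (Gender × Fin d) =>
        s.1 = (Gender.B, t) ∧ s.2.1 = Gender.B) ∩
        (Finset.univ.filter fun s => s.1.1 = Gender.B ∧ s.2 = (Gender.B, t)))
        = ({((Gender.B, t), (Gender.B, t))} :
            Finset ((Gender × Fin d) × (Gender × Fin d))) := by
      ext s
      simp only [Finset.mem_inter, Finset.mem_filter, Finset.mem_univ, true_and,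
        Finset.mem_singleton, Prod.ext_iff]
      tauto
    rw [Finset.card_union, hinter, h1, h2, Finset.card_singleton, Finset.card_product,
      Finset.card_product, Finset.card_singleton, hBcard, one_mul, mul_one]
    omega
  -- denominator
  have hden : (Finset.univ.filter fun s : (Gender × Fin d) × (Gender × Fin d) =>
      s.1 = (Gender.B, t) ∨ s.2 = (Gender.B, t)).card = 4 * d - 1 := by
    rw [Finset.filter_or]
    have h1 : (Finset.univ.filter fun s : (Gender × Fin d) × (Gender × Fin d) =>
        s.1 = (Gender.B, t))
        = ({(Gender.B, t)} : Finset (Gender × Fin d)) ×ˢ Finset.univ := by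
      ext s
      simp only [Finset.mem_filter, Finset.mem_univ, true_and, Finset.mem_product,
        Finset.mem_singleton, and_true]
    have h2 : (Finset.univ.filter fun s : (Gender × Fin d) × (Gender × Fin d) =>
        s.2 = (Gender.B, t))
        = (Finset.univ : Finset (Gender × Fin d)) ×ˢ
          ({(Gender.B, t)} : Finset (Gender × Fin d)) := by
      ext s
      simp only [Finset.mem_filter, Finset.mem_univ, true_and, Finset.mem_product,
        Finset.mem_singleton]
    have hinter : ((Finset.univ.filter fun s : (Gender × Fin d) × (Gender × Fin d) =>
        s.1 = (Gender.B, t)) ∩ (Finset.univ.filter fun s => s.2 = (Gender.B, t)))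
        = ({((Gender.B, t), (Gender.B, t))} :
            Finset ((Gender × Fin d) × (Gender × Fin d))) := by
      ext s
      simp only [Finset.mem_inter, Finset.mem_filter, Finset.mem_univ, true_and,
        Finset.mem_singleton, Prod.ext_iff]
    have hG : Fintype.card Gender = 2 := rfl
    have hcard : Fintype.card (Gender × Fin d) = 2 * d := by
      rw [Fintype.card_prod, hG, Fintype.card_fin]
    rw [Finset.card_union, hinter, h1, h2, Finset.card_singleton, Finset.card_product,
      Finset.card_product, Finset.card_singleton, Finset.card_univ, hcard, one_mul, mul_one]
    omega
  unfold condProb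
  rw [hnum, hden]
  have h1 : ((2 * d - 1 : ℕ) : ℚ) = 2 * (d : ℚ) - 1 := by
    have h : 1 ≤ 2 * d := by omega
    push_cast [Nat.cast_sub h]
    ring
  have h2 : ((4 * d - 1 : ℕ) : ℚ) = 4 * (d : ℚ) - 1 := by
    have h : 1 ≤ 4 * d := by omega
    push_cast [Nat.cast_sub h]
    ring
  rw [h1, h2]
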